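/- Define integer coefficients f_{j,k} for 0 ≤ j ≤ k by f_{0,k} = k!, f_{k,k} = 1, and the recursion f_{j,k+1} = f_{j-1,k} + (k+j+1)·f_{j,k} for 1 ≤ j ≤ k. Then there exist constants c ≥ 1 and C ≥ 1 such that f_{j,k}·j!/k! ≤ c·C^{j+k} for all 0 ≤ j ≤ k. -/

import Mathlib

/-- The coefficients `f_{j,k}` (for `0 ≤ j ≤ k`, and `0` out of range), defined by
`f_{0,k} = k!`, `f_{k,k} = 1` and `f_{j,k+1} = f_{j-1,k} + (k+j+1) f_{j,k}` for `1 ≤ j ≤ k`. -/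
def fCoeff : ℕ → ℕ → ℕ
  | 0, k => Nat.factorial k
  | _ + 1, 0 => 0
  | j + 1, k + 1 =>
      if j + 1 ≤ k then fCoeff j k + (k + j + 2) * fCoeff (j + 1) k
      else if j = k then 1 else 0

lemma fCoeff_key : ∀ k j : ℕ, j ≤ k →
    fCoeff j k * Nat.factorial j ≤ Nat.factorial k * 3 ^ (j + k) := by
  intro k
  induction k with
  | zero =>
    intro j hj
    interval_cases j
    simp [fCoeff]
  | succ k ih =>
    intro j hj
    match j with
    | 0 =>
      simp only [fCoeff, Nat.factorial]
      have h3 : 1 ≤ 3 ^ (0 + (k+1)) := Nat.one_le_pow _ _ (by norm_num)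
      simpa using Nat.mul_le_mul_left (k.succ * k.factorial) h3
    | j + 1 =>
      by_cases h : j + 1 ≤ k
      · have h1 := ih j (Nat.le_of_succ_le h)
        have h2 := ih (j+1) h
        simp only [fCoeff, if_pos h]
        have e : (fCoeff j k + (k + j + 2) * fCoeff (j + 1) k) * Nat.factorial (j+1)
            = (j+1) * (fCoeff j k * Nat.factorial j)
              + (k + j + 2) * (fCoeff (j+1) k * Nat.factorial (j+1)) := by
          rw [Nat.factorial_succ]; ring
        rw [e]
        have b1 : (j+1) * (fCoeff j k * Nat.factorial j)
            ≤ (k+1) * (Nat.factorial k * 3 ^ (j + k)) := by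
          exact Nat.mul_le_mul (by omega) h1
        have b2 : (k + j + 2) * (fCoeff (j+1) k * Nat.factorial (j+1))
            ≤ (2*(k+1)) * (Nat.factorial k * 3 ^ (j + 1 + k)) := by
          exact Nat.mul_le_mul (by omega) h2
        calc (j+1) * (fCoeff j k * Nat.factorial j)
              + (k + j + 2) * (fCoeff (j+1) k * Nat.factorial (j+1))
            ≤ (k+1) * (Nat.factorial k * 3 ^ (j + k))
              + (2*(k+1)) * (Nat.factorial k * 3 ^ (j + 1 + k)) := Nat.add_le_add b1 b2
          _ ≤ Nat.factorial (k+1) * 3 ^ (j + 1 + (k + 1)) := by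
              rw [Nat.factorial_succ]
              have e1 : j + 1 + k = (j + k) + 1 := by omega
              have e2 : j + 1 + (k + 1) = (j + k) + 2 := by omega
              rw [e1, e2, pow_succ, pow_succ]
              calc (k+1) * (Nat.factorial k * 3 ^ (j + k))
                    + 2*(k+1) * (Nat.factorial k * (3 ^ (j + k) * 3))
                  = 7 * ((k+1) * Nat.factorial k * 3 ^ (j + k)) := by ring
                _ ≤ 9 * ((k+1) * Nat.factorial k * 3 ^ (j + k)) :=
                    Nat.mul_le_mul_right _ (by norm_num)
                _ = (k+1) * Nat.factorial k * (3 ^ (j + k) * 3 * 3) := by ring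
      · have hjk : j = k := by omega
        subst hjk
        rw [show fCoeff (j+1) (j+1) = 1 from by simp [fCoeff, h], one_mul]
        calc Nat.factorial (j+1) ≤ Nat.factorial (j+1) * 3 ^ (j + 1 + (j+1)) :=
          Nat.le_mul_of_pos_right _ (Nat.pow_pos (by norm_num))

/-- There exist `c ≥ 1` and `C ≥ 1` with `f_{j,k}·j!/k! ≤ c·C^{j+k}` for all `0 ≤ j ≤ k`. -/
theorem fCoeff_subexponential :
    ∃ c C : ℝ, 1 ≤ c ∧ 1 ≤ C ∧ ∀ j k : ℕ, j ≤ k →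
      (fCoeff j k : ℝ) * (Nat.factorial j : ℝ) / (Nat.factorial k : ℝ) ≤ c * C ^ (j + k) := by
  refine ⟨1, 3, le_refl 1, by norm_num, fun j k hjk => ?_⟩
  have h := fCoeff_key k j hjk
  have hk : (0:ℝ) < (Nat.factorial k : ℝ) := by exact_mod_cast Nat.factorial_pos k
  rw [div_le_iff₀ hk, one_mul]
  have : ((fCoeff j k * Nat.factorial j : ℕ) : ℝ) ≤ ((Nat.factorial k * 3 ^ (j + k) : ℕ) : ℝ) :=
    by exact_mod_cast h
  push_cast at this
  linarith
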